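/- Assume S is nontrivial (0 ≠ 1 in S). Then the map X → Meas_S(X) sending x to the Dirac measure δ_x is a topological embedding of X onto a closed subset of Meas_S(X). -/

import Mathlib

open TopologicalSpace

/-- An `S`-valued measure on a topological space `X`: a finitely additive function from
the Boolean algebra of clopen subsets of `X` to `S`. -/
def IsSMeasure (S : Type*) [Semiring S] (X : Type*) [TopologicalSpace X]
    (μ : Clopens X → S) : Prop :=
  μ ⊥ = 0 ∧ ∀ K L : Clopens X, K ⊓ L = ⊥ → μ (K ⊔ L) = μ K + μ L

/-- The space `Meas_S(X)` of all `S`-valued measures on `X`, topologized as a subspace of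
the product space `Clopens X → S` (with `S` carrying a topology, which below is assumed
to be the discrete one). -/
abbrev SMeas (S : Type*) [Semiring S] [TopologicalSpace S]
    (X : Type*) [TopologicalSpace X] : Type _ :=
  {μ : Clopens X → S // IsSMeasure S X μ}

open scoped Classical in
/-- The Dirac measure at a point `x` of `X`: it sends a clopen `K` to `1` if `x ∈ K` and to
`0` otherwise. -/
noncomputable def diracMeas (S : Type*) [Semiring S] {X : Type*} [TopologicalSpace X]
    (x : X) : Clopens X → S :=
  fun K => if x ∈ K then 1 else 0

/-- The Dirac measure is an `S`-valued measure. -/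
theorem isSMeasure_diracMeas (S : Type*) [Semiring S] {X : Type*} [TopologicalSpace X]
    (x : X) : IsSMeasure S X (diracMeas S x) := by
  classical
  refine ⟨?_, fun K L h => ?_⟩
  · show (if x ∈ (⊥ : Clopens X) then (1 : S) else 0) = 0
    rw [if_neg]
    intro hx
    exact absurd hx (by simp [← SetLike.mem_coe])
  · show (if x ∈ K ⊔ L then (1 : S) else 0) = _
    have hdisj : ¬(x ∈ K ∧ x ∈ L) := by
      rintro ⟨hK, hL⟩
      have : x ∈ K ⊓ L := by simp [← SetLike.mem_coe] at hK hL ⊢; exact ⟨hK, hL⟩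
      rw [h] at this
      exact absurd this (by simp [← SetLike.mem_coe])
    have hsup : x ∈ K ⊔ L ↔ x ∈ K ∨ x ∈ L := by
      simp [← SetLike.mem_coe]
    unfold diracMeas
    by_cases hK : x ∈ K <;> by_cases hL : x ∈ L
    · exact absurd ⟨hK, hL⟩ hdisj
    · rw [if_pos (hsup.2 (Or.inl hK)), if_pos hK, if_neg hL, add_zero]
    · rw [if_pos (hsup.2 (Or.inr hL)), if_neg hK, if_pos hL, zero_add]
    · rw [if_neg (fun hx => (hsup.1 hx).elim hK hL), if_neg hK, if_neg hL, add_zero]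

/-- If `0 ≠ 1` in `S`, the map `X → Meas_S(X)` sending `x` to the Dirac
measure `δ_x` is a topological embedding of `X` onto a closed subset of `Meas_S(X)`. -/
theorem diracMeas_isClosedEmbedding (S X : Type*) [CommSemiring S] [Finite S]
    [TopologicalSpace S] [DiscreteTopology S]
    [TopologicalSpace X] [CompactSpace X] [T2Space X] [TotallyDisconnectedSpace X]
    (h01 : (0 : S) ≠ 1) :
    Topology.IsClosedEmbedding (fun x : X =>
      (⟨diracMeas S x, isSMeasure_diracMeas S x⟩ : SMeas S X)) := by
  classical
  have : TotallySeparatedSpace X := loc_compact_t2_tot_disc_iff_tot_sep.mp inferInstance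
  have hcont : Continuous (fun x : X =>
      (⟨diracMeas S x, isSMeasure_diracMeas S x⟩ : SMeas S X)) := by
    rw [continuous_induced_rng]
    apply continuous_pi
    intro K
    show Continuous (fun x : X => if x ∈ K then (1:S) else 0)
    apply continuous_if
    · intro a ha
      have h2 : {x : X | x ∈ K} = (K : Set X) := rfl
      rw [h2, K.isClopen.frontier_eq] at ha
      exact absurd ha (Set.notMem_empty a)
    · exact continuous_const.continuousOn
    · exact continuous_const.continuousOn
  have hinj : Function.Injective (fun x : X =>
      (⟨diracMeas S x, isSMeasure_diracMeas S x⟩ : SMeas S X)) := by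
    intro x y hxy
    by_contra hne
    obtain ⟨U, hU, hxU, hyU⟩ := exists_isClopen_of_totally_separated hne
    have := congrArg (fun μ : SMeas S X => μ.1 ⟨U, hU⟩) hxy
    simp only [diracMeas] at this
    have hx' : x ∈ (⟨U, hU⟩ : Clopens X) := hxU
    have hy' : y ∉ (⟨U, hU⟩ : Clopens X) := hyU
    rw [if_pos hx', if_neg hy'] at this
    exact h01 this.symm
  exact hcont.isClosedEmbedding hinj
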